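/- Let 0 < |a| < 1 and define f(λ) = (ω₋(λ) − |a|²)/(ω₊(λ) − |a|²) where ω±(λ) = (1/2)[λ²+1 ± √((λ²+1)² − 4|a|²λ²)]. Then |f(i)| = (1+|a|)/(1−|a|), and |f(λ)| ≤ (1+|a|)/(1−|a|) for all λ in the closed unit disk. -/

import Mathlib

/-- with `ω±(λ)` the roots of `ω² − (λ²+1)ω + |a|²λ² = 0`
(the branch chosen so that `|ω₋| ≤ |ω₊|`) and
`f(λ) = (ω₋(λ) − |a|²)/(ω₊(λ) − |a|²)`, one has `|f(i)| = (1+|a|)/(1−|a|)`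
(at `λ = i` the roots are `ω₊ = |a|, ω₋ = −|a|`), and
`|f(λ)| ≤ (1+|a|)/(1−|a|)` for every `λ` in the closed unit disk. -/
theorem stmt_11 (a : ℂ) (ha0 : 0 < ‖a‖) (ha1 : ‖a‖ < 1) :
    (‖(-(‖a‖ : ℂ) - (‖a‖ : ℂ) ^ 2) /
        ((‖a‖ : ℂ) - (‖a‖ : ℂ) ^ 2)‖ =
      (1 + ‖a‖) / (1 - ‖a‖)) ∧
    (∀ lam ωp ωm : ℂ, ‖lam‖ ≤ 1 →
      ωp + ωm = lam ^ 2 + 1 →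
      ωp * ωm = (‖a‖ : ℂ) ^ 2 * lam ^ 2 →
      ‖ωm‖ ≤ ‖ωp‖ →
      ‖(ωm - (‖a‖ : ℂ) ^ 2) / (ωp - (‖a‖ : ℂ) ^ 2)‖ ≤
        (1 + ‖a‖) / (1 - ‖a‖)) := by
  set r : ℝ := ‖a‖ with hr
  have hrpos : 0 < r := ha0
  have hr1 : r < 1 := ha1
  have hr2 : 0 < 1 - r ^ 2 := by nlinarith
  have hrr : 0 < r ^ 2 := by positivity
  constructor
  · have h1 : (-(r : ℂ) - (r : ℂ) ^ 2) = ((-(r + r ^ 2) : ℝ) : ℂ) := by push_cast; ring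
    have h2 : ((r : ℂ) - (r : ℂ) ^ 2) = (((r - r ^ 2) : ℝ) : ℂ) := by push_cast; ring
    rw [norm_div, h1, h2, Complex.norm_real, Real.norm_eq_abs, Complex.norm_real, Real.norm_eq_abs,
      abs_of_nonpos (by nlinarith), abs_of_pos (by nlinarith)]
    rw [div_eq_div_iff (by nlinarith) (by nlinarith)]
    ring
  · intro lam ωp ωm hlam hsum hprod hle
    have hkey : (ωm - (r : ℂ) ^ 2) * (ωp - (r : ℂ) ^ 2) = -(r : ℂ) ^ 2 * (1 - (r : ℂ) ^ 2) := by
      linear_combination hprod - (r : ℂ) ^ 2 * hsum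
    set A : ℝ := ‖ωm - (r : ℂ) ^ 2‖ with hA
    set B : ℝ := ‖ωp - (r : ℂ) ^ 2‖ with hB
    have hABval : A * B = r ^ 2 * (1 - r ^ 2) := by
      have h := congrArg (‖·‖) hkey
      rw [norm_mul] at h
      rw [hA, hB, h]
      have h3 : (-(r : ℂ) ^ 2 * (1 - (r : ℂ) ^ 2)) = (((-(r ^ 2) * (1 - r ^ 2)) : ℝ) : ℂ) := by
        push_cast; ring
      rw [h3, Complex.norm_real, Real.norm_eq_abs, abs_of_nonpos (by nlinarith [mul_pos hrr hr2])]
      ring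
    have hABpos : 0 < A * B := by rw [hABval]; exact mul_pos hrr hr2
    have hBnonneg : 0 ≤ B := norm_nonneg _
    have hAnonneg : 0 ≤ A := norm_nonneg _
    have hApos : 0 < A := by
      rcases hAnonneg.lt_or_eq with h | h
      · exact h
      · exfalso; rw [← h] at hABpos; simp at hABpos
    have hBpos : 0 < B := by nlinarith
    -- |ωm| ≤ r
    have hl2 : ‖lam‖ ^ 2 ≤ 1 := by
      nlinarith [norm_nonneg lam]
    have h2 : ‖ωm‖ * ‖ωp‖ = r ^ 2 * ‖lam‖ ^ 2 := by
      have h := congrArg (‖·‖) hprod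
      rw [norm_mul, norm_mul, norm_pow, norm_pow, Complex.norm_real, Real.norm_eq_abs, abs_of_pos hrpos] at h
      rw [mul_comm]; exact h
    have hsq : ‖ωm‖ ^ 2 ≤ r ^ 2 := by
      have h1 : ‖ωm‖ * ‖ωm‖ ≤ ‖ωm‖ * ‖ωp‖ :=
        mul_le_mul_of_nonneg_left hle (norm_nonneg _)
      nlinarith [mul_le_mul_of_nonneg_left hl2 hrr.le]
    have hωm : ‖ωm‖ ≤ r := by
      nlinarith [norm_nonneg ωm]
    have hAle : A ≤ r + r ^ 2 := by
      have ht : A ≤ ‖ωm‖ + ‖(r : ℂ) ^ 2‖ := by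
        rw [hA, sub_eq_add_neg]
        refine (norm_add_le _ _).trans ?_
        rw [norm_neg]
      have h2 : ‖(r : ℂ) ^ 2‖ = r ^ 2 := by
        rw [norm_pow, Complex.norm_real, Real.norm_eq_abs, abs_of_pos hrpos]
      rw [h2] at ht
      linarith
    have hBge : r * (1 - r) ≤ B := by
      have h := mul_le_mul_of_nonneg_right hAle hBnonneg
      rw [hABval] at h
      nlinarith [mul_pos hrpos hrpos]
    rw [norm_div, ← hA, ← hB, div_le_div_iff₀ hBpos (by linarith)]
    nlinarith [mul_le_mul_of_nonneg_right hAle (by linarith : (0:ℝ) ≤ 1 - r),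
      mul_le_mul_of_nonneg_left hBge (by linarith : (0:ℝ) ≤ 1 + r)]
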